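/- Let D = {0,...,n} and fix k ≥ 2 and 1 < r ≤ k. For a word w = w_1⋯w_k ∈ D^k write w_pre = w_1⋯w_{k+1−r} (first k+1−r digits) and w_suf = w_{k+2−r}⋯w_k (last r−1 digits). If w_pre ≠ n^{k+1−r}, then there is exactly one index 0 ≤ p ≤ (n+1)^k − 2 such that the concatenation w_p w_{p+1} of the p-th and (p+1)-th words of D^k (in lexicographic order) equals w_suf · w · (w_pre)^+, where (w_pre)^+ is the lexicographic successor of w_pre among words of length k+1−r. -/

import Mathlib

lemma aux_bound (b L : ℕ) (a : ℕ → ℕ) (hb : 1 ≤ b) (ha : ∀ i < L, a i < b) :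
    (∑ e ∈ Finset.range L, a e * b ^ e) < b ^ L := by
  induction L with
  | zero => simp
  | succ L ih =>
    rw [Finset.sum_range_succ]
    have h1 : (∑ e ∈ Finset.range L, a e * b ^ e) < b ^ L :=
      ih (fun i hi => ha i (by omega))
    have h2 : a L ≤ b - 1 := by have := ha L (by omega); omega
    have h3 : a L * b ^ L ≤ (b - 1) * b ^ L := Nat.mul_le_mul_right _ h2
    have hbl : 1 ≤ b ^ L := Nat.one_le_pow _ _ hb
    have h5 : b ^ L ≤ b * b ^ L := Nat.le_mul_of_pos_left _ hb
    have h4 : (b - 1) * b ^ L + b ^ L = b ^ (L + 1) := by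
      rw [Nat.sub_one_mul, pow_succ']; omega
    omega

lemma aux_digit (b L : ℕ) (a : ℕ → ℕ) (hb : 1 ≤ b) (ha : ∀ i < L, a i < b) :
    ∀ j < L, (∑ e ∈ Finset.range L, a e * b ^ e) / b ^ j % b = a j := by
  induction L with
  | zero => omega
  | succ L ih =>
    intro j hj
    rw [Finset.sum_range_succ]
    rcases Nat.lt_or_ge j L with h | h
    · have hdvd : b ^ j ∣ a L * b ^ L := Dvd.dvd.mul_left (pow_dvd_pow b (by omega)) _
      rw [Nat.add_div_of_dvd_left hdvd, Nat.mul_div_assoc _ (pow_dvd_pow b (by omega)),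
        Nat.pow_div (by omega) (by omega)]
      have hb2 : b ∣ b ^ (L - j) := dvd_pow_self b (by omega)
      obtain ⟨c, hc⟩ := hb2
      rw [hc, show a L * (b * c) = b * (a L * c) by ring, Nat.add_mul_mod_self_left]
      exact ih (fun i hi => ha i (by omega)) j h
    · have hj' : j = L := by omega
      rw [hj']
      have h1 : (∑ e ∈ Finset.range L, a e * b ^ e) < b ^ L :=
        aux_bound b L a hb (fun i hi => ha i (by omega))
      rw [Nat.add_div_of_dvd_left (Dvd.dvd.mul_left dvd_rfl _),
        Nat.div_eq_of_lt h1, Nat.mul_div_cancel _ (Nat.pow_pos (n := L) hb)]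
      simpa using Nat.mod_eq_of_lt (ha L (by omega))

lemma aux_recon (b L x : ℕ) :
    (∑ e ∈ Finset.range L, x / b ^ e % b * b ^ e) = x % b ^ L := by
  induction L with
  | zero => simp [Nat.mod_one]
  | succ L ih =>
    rw [Finset.sum_range_succ, ih]
    have h1 : x % b ^ (L + 1) % b ^ L = x % b ^ L :=
      Nat.mod_mod_of_dvd _ (pow_dvd_pow b (by omega))
    have h2 : x % b ^ (L + 1) / b ^ L = x / b ^ L % b := by
      rw [pow_succ]; exact Nat.mod_mul_right_div_self x (b ^ L) b
    have := Nat.div_add_mod (x % b ^ (L+1)) (b ^ L)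
    rw [h1, h2, mul_comm] at this
    omega

lemma fwd_reflect (b L : ℕ) (c : ℕ → ℕ) :
    (∑ i ∈ Finset.range L, c i * b ^ (L - 1 - i))
      = ∑ j ∈ Finset.range L, c (L - 1 - j) * b ^ j := by
  rw [← Finset.sum_range_reflect]
  refine Finset.sum_congr rfl fun j hj => ?_
  simp only [Finset.mem_range] at hj
  rw [show L - 1 - (L - 1 - j) = j from by omega]

lemma fwd_bound (b L : ℕ) (c : ℕ → ℕ) (hb : 1 ≤ b) (hc : ∀ i < L, c i < b) :
    (∑ i ∈ Finset.range L, c i * b ^ (L - 1 - i)) < b ^ L := by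
  rw [fwd_reflect]
  exact aux_bound b L _ hb (fun i hi => hc _ (by omega))

lemma fwd_digit (b L : ℕ) (c : ℕ → ℕ) (hb : 1 ≤ b) (hc : ∀ i < L, c i < b)
    (t : ℕ) (ht : t < L) :
    (∑ i ∈ Finset.range L, c i * b ^ (L - 1 - i)) / b ^ (L - 1 - t) % b = c t := by
  rw [fwd_reflect]
  have := aux_digit b L (fun j => c (L - 1 - j)) hb (fun i hi => hc _ (by omega))
    (L - 1 - t) (by omega)
  simpa [show L - 1 - (L - 1 - t) = t by omega] using this

lemma fwd_recon (b L x : ℕ) (hx : x < b ^ L) :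
    (∑ t ∈ Finset.range L, x / b ^ (L - 1 - t) % b * b ^ (L - 1 - t)) = x := by
  have h : (∑ t ∈ Finset.range L, x / b ^ (L - 1 - t) % b * b ^ (L - 1 - t))
      = ∑ j ∈ Finset.range L, x / b ^ j % b * b ^ j := by
    rw [← Finset.sum_range_reflect]
    refine Finset.sum_congr rfl fun j hj => ?_
    simp only [Finset.mem_range] at hj
    rw [show L - 1 - (L - 1 - j) = j from by omega]
  rw [h, aux_recon, Nat.mod_eq_of_lt hx]

/-- enumerate the words of length `k` over `{0,…,n}` in increasing
lexicographic order; the word with index `p` has `t`-th letter `p / (n+1)^(k-1-t) % (n+1)`.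
Fix `1 < r ≤ k` and a word `w` (with letters `w 0, …, w (k-1) ≤ n`), and write
`w_pre = w_1⋯w_{k+1-r}` (first `k+1-r` letters) and `w_suf = w_{k+2-r}⋯w_k` (last `r-1`
letters).  If `w_pre ≠ n^{k+1-r}`, then there is exactly one index `p ≤ (n+1)^k - 2` such
that the concatenation of the `p`-th and `(p+1)`-th words equals the length-`2k` word
`T = w_suf · w · (w_pre)⁺`, where `(w_pre)⁺` is the lexicographic successor of `w_pre`
(numerically: the word of value `val(w_pre) + 1`). -/
theorem unique_consecutive_pair (n k r : ℕ) (hn : 1 ≤ n) (hk : 2 ≤ k)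
    (hr1 : 1 < r) (hrk : r ≤ k)
    (w : ℕ → ℕ) (hw : ∀ t < k, w t ≤ n)
    (hpre : ¬ (∀ t < k + 1 - r, w t = n))
    (T : ℕ → ℕ)
    (hT : ∀ t, T t =
      if t < r - 1 then w (k + 1 - r + t)
      else if t < r - 1 + k then w (t - (r - 1))
      else ((∑ s ∈ Finset.range (k + 1 - r), w s * (n + 1) ^ (k - r - s)) + 1)
              / (n + 1) ^ (k - r - (t - (r - 1 + k))) % (n + 1)) :
    ∃! p : ℕ, p ≤ (n + 1) ^ k - 2 ∧
      (∀ t < k, p / (n + 1) ^ (k - 1 - t) % (n + 1) = T t) ∧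
      (∀ t < k, (p + 1) / (n + 1) ^ (k - 1 - t) % (n + 1) = T (k + t)) := by
  set b := n + 1 with hbdef
  set m := k + 1 - r with hmdef
  set q := r - 1 with hqdef
  have hb1 : 1 ≤ b := by omega
  have hqm : q + m = k := by omega
  have hm1 : 1 ≤ m := by omega
  have hq1 : 1 ≤ q := by omega
  set V := ∑ s ∈ Finset.range m, w s * b ^ (k - r - s) with hVdef
  set A := ∑ t ∈ Finset.range q, w (m + t) * b ^ (q - 1 - t) with hAdef
  have hVform : V = ∑ s ∈ Finset.range m, w s * b ^ (m - 1 - s) := by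
    refine Finset.sum_congr rfl fun s hs => ?_
    congr 2
    omega
  -- V + 1 < b ^ m
  have hV1 : V + 1 < b ^ m := by
    push_neg at hpre
    obtain ⟨s0, hs0m, hs0⟩ := hpre
    have hws0 : w s0 < n := by
      have := hw s0 (by omega); omega
    have key : V + b ^ (m - 1 - s0) =
        ∑ s ∈ Finset.range m, (w s + if s = s0 then 1 else 0) * b ^ (m - 1 - s) := by
      have h : ∀ s, (w s + if s = s0 then 1 else 0) * b ^ (m - 1 - s)
          = w s * b ^ (m - 1 - s) + (if s = s0 then b ^ (m - 1 - s) else 0) := by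
        intro s; split <;> ring
      simp only [h, Finset.sum_add_distrib]
      rw [← hVform, Finset.sum_ite_eq' (Finset.range m) s0 (fun s => b ^ (m - 1 - s)),
        if_pos (Finset.mem_range.mpr hs0m)]
    have hlt : (∑ s ∈ Finset.range m, (w s + if s = s0 then 1 else 0) * b ^ (m - 1 - s))
        < b ^ m := by
      refine fwd_bound b m _ hb1 fun i hi => ?_
      have hwi := hw i (by omega)
      by_cases his : i = s0
      · subst his
        rw [if_pos rfl]
        omega
      · rw [if_neg his]
        omega
    have hpow1 : 1 ≤ b ^ (m - 1 - s0) := Nat.one_le_pow _ _ (by omega)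
    omega
  have hA : A < b ^ q := by
    refine fwd_bound b q _ hb1 fun i hi => ?_
    have := hw (m + i) (by omega); omega
  have hS1lt : A * b ^ m + V + 1 < b ^ k := by
    have h1 : A * b ^ m ≤ (b ^ q - 1) * b ^ m := Nat.mul_le_mul_right _ (by omega)
    have h2 : (b ^ q - 1) * b ^ m + b ^ m = b ^ q * b ^ m := by
      rw [Nat.sub_one_mul]
      have : b ^ m ≤ b ^ q * b ^ m := Nat.le_mul_of_pos_left _ (Nat.pow_pos (n := q) hb1)
      omega
    have h3 : b ^ q * b ^ m = b ^ k := by rw [← pow_add, hqm]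
    omega
  have hbk : 2 ≤ b ^ k := by
    calc 2 = 2 ^ 1 := rfl
    _ ≤ b ^ k := Nat.pow_le_pow_left (by omega) k |>.trans' (Nat.pow_le_pow_right (by omega) (by omega))
  -- digit functions
  have hcb : ∀ t < k, (if t < q then w (m + t) else w (t - q)) < b := by
    intro t ht
    split
    · have := hw (m + t) (by omega); omega
    · have := hw (t - q) (by omega); omega
  have hc'b : ∀ t < k, (if t < q then w (m + t) else (V + 1) / b ^ (m - 1 - (t - q)) % b) < b := by
    intro t ht
    split
    · have := hw (m + t) (by omega); omega
    · exact Nat.mod_lt _ (by omega)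
  have hSsum : A * b ^ m + V =
      ∑ t ∈ Finset.range k, (if t < q then w (m + t) else w (t - q)) * b ^ (k - 1 - t) := by
    rw [hVform, show k = q + m from by omega, Finset.sum_range_add]
    congr 1
    · rw [Finset.sum_mul]
      refine Finset.sum_congr rfl fun t ht => ?_
      simp only [Finset.mem_range] at ht
      rw [if_pos ht, mul_assoc, ← pow_add]
      congr 2
      omega
    · refine Finset.sum_congr rfl fun s hs => ?_
      simp only [Finset.mem_range] at hs
      rw [if_neg (by omega), show q + s - q = s from by omega,
        show q + m - 1 - (q + s) = m - 1 - s from by omega]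
  have hS1sum : A * b ^ m + V + 1 =
      ∑ t ∈ Finset.range k,
        (if t < q then w (m + t) else (V + 1) / b ^ (m - 1 - (t - q)) % b) * b ^ (k - 1 - t) := by
    have hrec : (∑ s ∈ Finset.range m, (V + 1) / b ^ (m - 1 - s) % b * b ^ (m - 1 - s)) = V + 1 :=
      fwd_recon b m (V + 1) hV1
    rw [show A * b ^ m + V + 1 = A * b ^ m + (V + 1) from by omega,
      show k = q + m from by omega, Finset.sum_range_add]
    congr 1
    · rw [Finset.sum_mul]
      refine Finset.sum_congr rfl fun t ht => ?_
      simp only [Finset.mem_range] at ht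
      rw [if_pos ht, mul_assoc, ← pow_add]
      congr 2
      omega
    · conv_lhs => rw [← hrec]
      refine Finset.sum_congr rfl fun s hs => ?_
      simp only [Finset.mem_range] at hs
      rw [if_neg (by omega), show q + s - q = s from by omega,
        show q + m - 1 - (q + s) = m - 1 - s from by omega]
  have hdig : ∀ t < k, (A * b ^ m + V) / b ^ (k - 1 - t) % b
      = (if t < q then w (m + t) else w (t - q)) := by
    intro t ht
    rw [hSsum]
    exact fwd_digit b k _ hb1 hcb t ht
  have hdig' : ∀ t < k, (A * b ^ m + V + 1) / b ^ (k - 1 - t) % b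
      = (if t < q then w (m + t) else (V + 1) / b ^ (m - 1 - (t - q)) % b) := by
    intro t ht
    rw [hS1sum]
    exact fwd_digit b k _ hb1 hc'b t ht
  -- the three conditions for S
  have cond1 : A * b ^ m + V ≤ b ^ k - 2 := by omega
  have cond2 : ∀ t < k, (A * b ^ m + V) / b ^ (k - 1 - t) % b = T t := by
    intro t ht
    rw [hdig t ht, hT t]
    by_cases h : t < q
    · rw [if_pos h, if_pos h]
    · rw [if_neg h, if_neg h, if_pos (show t < q + k from by omega)]
  have cond3 : ∀ t < k, (A * b ^ m + V + 1) / b ^ (k - 1 - t) % b = T (k + t) := by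
    intro t ht
    rw [hdig' t ht, hT (k + t)]
    rw [if_neg (show ¬ k + t < q from by omega)]
    by_cases h : t < q
    · rw [if_pos (show k + t < q + k from by omega), if_pos h]
      congr 1
      omega
    · rw [if_neg (show ¬ k + t < q + k from by omega), if_neg h]
      have h1 : k - r - (k + t - (q + k)) = m - 1 - (t - q) := by omega
      rw [h1]
  refine ⟨A * b ^ m + V, ⟨cond1, cond2, cond3⟩, ?_⟩
  rintro p' ⟨hp'le, hp'1, hp'2⟩
  have hp'lt : p' < b ^ k := by omega
  have hSlt : A * b ^ m + V < b ^ k := by omega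
  have e1 : p' = ∑ t ∈ Finset.range k, T t * b ^ (k - 1 - t) := by
    rw [← fwd_recon b k p' hp'lt]
    refine Finset.sum_congr rfl fun t ht => ?_
    simp only [Finset.mem_range] at ht
    rw [hp'1 t ht]
  have e2 : A * b ^ m + V = ∑ t ∈ Finset.range k, T t * b ^ (k - 1 - t) := by
    rw [← fwd_recon b k (A * b ^ m + V) hSlt]
    refine Finset.sum_congr rfl fun t ht => ?_
    simp only [Finset.mem_range] at ht
    rw [cond2 t ht]
  rw [e1, ← e2]
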